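/- arXiv:1704.05758 — 4 statements merged into one kernel-verified Lean document; each statement's English description precedes it below -/
import Mathlib

section
/- Let A_j be a finite nonempty collection of multisets in R^d, each of cardinality k, where each X ∈ A_j is written X = {x^{(X)}_1, ..., x^{(X)}_k}. Define ρ₂(X,Y) = min_τ Σ_{i=1}^k ‖x_i − y_{τ(i)}‖² for multisets of equal cardinality k. Let permutations {τ*_X}_{X ∈ A_j} minimize Σ_{i=1}^k Σ_{X ∈ A_j} Σ_{X' ∈ A_j} ‖x^{(X)}_{τ_X(i)} − x^{(X')}_{τ_{X'}(i)}‖² over all collections of permutations, and define X*_j = {x*_1, ..., x*_k} with x*_i = (1/|A_j|) Σ_{X ∈ A_j} x^{(X)}_{τ*_X(i)}. Then for every multiset X̃ ⊆ R^d of cardinality k, Σ_{X ∈ A_j} ρ₂(X, X*_j) ≤ Σ_{X ∈ A_j} ρ₂(X, X̃), i.e., X*_j is a center point pattern. -/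
open scoped BigOperators

section aux

variable {E : Type*} [NormedAddCommGroup E] [InnerProductSpace ℝ E]
variable {ι : Type*} [Fintype ι] [Nonempty ι]

/-- Bias–variance decomposition around the mean. -/
lemma biasvar (a : ι → E) (y : E) :
    ∑ X, ‖a X - y‖ ^ 2
      = ∑ X, ‖a X - (Fintype.card ι : ℝ)⁻¹ • ∑ X', a X'‖ ^ 2
        + (Fintype.card ι : ℝ) * ‖(Fintype.card ι : ℝ)⁻¹ • (∑ X', a X') - y‖ ^ 2 := by
  set m : E := (Fintype.card ι : ℝ)⁻¹ • ∑ X', a X' with hm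
  have hn : (Fintype.card ι : ℝ) ≠ 0 := by
    exact_mod_cast (Fintype.card_pos (α := ι)).ne'
  have hsum : ∑ X, (a X - m) = 0 := by
    rw [Finset.sum_sub_distrib, Finset.sum_const, Finset.card_univ]
    rw [hm, ← Nat.cast_smul_eq_nsmul ℝ, smul_smul, mul_inv_cancel₀ hn, one_smul, sub_self]
  calc ∑ X, ‖a X - y‖ ^ 2
      = ∑ X, ‖(a X - m) + (m - y)‖ ^ 2 := by
        refine Finset.sum_congr rfl fun X _ => ?_
        rw [sub_add_sub_cancel]
    _ = ∑ X, (‖a X - m‖ ^ 2 + 2 * inner ℝ (a X - m) (m - y) + ‖m - y‖ ^ 2) := by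
        refine Finset.sum_congr rfl fun X _ => ?_
        exact norm_add_sq_real _ _
    _ = ∑ X, ‖a X - m‖ ^ 2 + (Fintype.card ι : ℝ) * ‖m - y‖ ^ 2 := by
        rw [Finset.sum_add_distrib, Finset.sum_add_distrib]
        have : ∑ X, 2 * (inner ℝ (a X - m) (m - y) : ℝ)
            = 2 * (inner ℝ (∑ X, (a X - m)) (m - y) : ℝ) := by
          rw [sum_inner, Finset.mul_sum]
        rw [this, hsum]
        simp [Finset.sum_const, Finset.card_univ, nsmul_eq_mul]

/-- Sum of pairwise squared distances equals `2n` times the variance. -/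
lemma pairsum (a : ι → E) :
    ∑ X, ∑ X', ‖a X - a X'‖ ^ 2
      = 2 * (Fintype.card ι : ℝ)
        * ∑ X, ‖a X - (Fintype.card ι : ℝ)⁻¹ • ∑ X', a X'‖ ^ 2 := by
  set m : E := (Fintype.card ι : ℝ)⁻¹ • ∑ X', a X' with hm
  rw [Finset.sum_comm]
  have : ∀ X' : ι, ∑ X, ‖a X - a X'‖ ^ 2
      = ∑ X, ‖a X - m‖ ^ 2 + (Fintype.card ι : ℝ) * ‖m - a X'‖ ^ 2 :=
    fun X' => biasvar a (a X')
  rw [Finset.sum_congr rfl fun X' _ => this X', Finset.sum_add_distrib]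
  rw [Finset.sum_const, Finset.card_univ, nsmul_eq_mul, ← Finset.mul_sum]
  have : ∑ X' : ι, ‖m - a X'‖ ^ 2 = ∑ X' : ι, ‖a X' - m‖ ^ 2 := by
    refine Finset.sum_congr rfl fun X' _ => ?_
    rw [norm_sub_rev]
  rw [this]
  ring

/-- The mean minimizes the sum of squared distances, with value
`(2n)⁻¹ ∑∑ ‖a X - a X'‖²`. -/
lemma lower_bound (a : ι → E) (y : E) :
    (2 * (Fintype.card ι : ℝ))⁻¹ * ∑ X, ∑ X', ‖a X - a X'‖ ^ 2
      ≤ ∑ X, ‖a X - y‖ ^ 2 := by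
  have hn : (0:ℝ) < (Fintype.card ι : ℝ) := by exact_mod_cast Fintype.card_pos
  rw [pairsum a, inv_mul_eq_div, mul_comm (2 * (Fintype.card ι : ℝ)),
    mul_div_assoc, div_self (by positivity), mul_one, biasvar a y]
  have : (0:ℝ) ≤ (Fintype.card ι : ℝ) * ‖(Fintype.card ι : ℝ)⁻¹ • (∑ X', a X') - y‖ ^ 2 := by
    positivity
  linarith

lemma eq_mean (a : ι → E) :
    ∑ X, ‖a X - (Fintype.card ι : ℝ)⁻¹ • ∑ X', a X'‖ ^ 2
      = (2 * (Fintype.card ι : ℝ))⁻¹ * ∑ X, ∑ X', ‖a X - a X'‖ ^ 2 := by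
  have hn : (0:ℝ) < (Fintype.card ι : ℝ) := by exact_mod_cast Fintype.card_pos
  rw [pairsum a]
  field_simp

end aux

/-- The squared optimal-assignment distortion `ρ₂` between two point patterns of
equal cardinality `k`, represented by tuples. -/
noncomputable def rho2 {d k : ℕ} (x y : Fin k → EuclideanSpace ℝ (Fin d)) : ℝ :=
  ⨅ τ : Equiv.Perm (Fin k), ∑ i, ‖x i - y (τ i)‖ ^ 2

/-- The point pattern built from the clique means of an optimal collection of
permutations is a center point pattern (Lemma 3 of the paper). -/
theorem center_point_pattern (d k : ℕ) (ι : Type*) [Fintype ι] [Nonempty ι]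
    (x : ι → Fin k → EuclideanSpace ℝ (Fin d))
    (τs : ι → Equiv.Perm (Fin k))
    (hτs : ∀ τ : ι → Equiv.Perm (Fin k),
      ∑ i : Fin k, ∑ X : ι, ∑ X' : ι, ‖x X (τs X i) - x X' (τs X' i)‖ ^ 2
        ≤ ∑ i : Fin k, ∑ X : ι, ∑ X' : ι, ‖x X (τ X i) - x X' (τ X' i)‖ ^ 2)
    (xstar : Fin k → EuclideanSpace ℝ (Fin d))
    (hxstar : ∀ i, xstar i = (Fintype.card ι : ℝ)⁻¹ • ∑ X : ι, x X (τs X i)) :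
    ∀ xt : Fin k → EuclideanSpace ℝ (Fin d),
      ∑ X : ι, rho2 (x X) xstar ≤ ∑ X : ι, rho2 (x X) xt := by
  intro xt
  classical
  have hn : (0:ℝ) < (Fintype.card ι : ℝ) := by exact_mod_cast Fintype.card_pos
  -- choose optimal permutations for xt
  have hatt : ∀ X : ι, ∃ σ : Equiv.Perm (Fin k),
      rho2 (x X) xt = ∑ i, ‖x X i - xt (σ i)‖ ^ 2 := by
    intro X
    obtain ⟨σ, hσ⟩ := exists_eq_ciInf_of_finite
      (f := fun τ : Equiv.Perm (Fin k) => ∑ i, ‖x X i - xt (τ i)‖ ^ 2)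
    exact ⟨σ, hσ.symm⟩
  choose σ hσ using hatt
  -- rho2 against xstar is at most the value for τs
  have hlb : ∀ X : ι, rho2 (x X) xstar ≤ ∑ i, ‖x X (τs X i) - xstar i‖ ^ 2 := by
    intro X
    have hb : BddBelow (Set.range fun τ : Equiv.Perm (Fin k) =>
        ∑ i, ‖x X i - xstar (τ i)‖ ^ 2) := (Set.finite_range _).bddBelow
    refine le_trans (ciInf_le hb ((τs X)⁻¹)) (le_of_eq ?_)
    rw [← Equiv.sum_comp (τs X) (fun i => ‖x X i - xstar ((τs X)⁻¹ i)‖ ^ 2)]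
    simp
  calc ∑ X : ι, rho2 (x X) xstar
      ≤ ∑ X : ι, ∑ i, ‖x X (τs X i) - xstar i‖ ^ 2 :=
        Finset.sum_le_sum fun X _ => hlb X
    _ = ∑ i, ∑ X : ι, ‖x X (τs X i) - xstar i‖ ^ 2 := Finset.sum_comm
    _ = ∑ i, (2 * (Fintype.card ι : ℝ))⁻¹
          * ∑ X : ι, ∑ X' : ι, ‖x X (τs X i) - x X' (τs X' i)‖ ^ 2 := by
        refine Finset.sum_congr rfl fun i _ => ?_
        have := eq_mean (fun X : ι => x X (τs X i))
        rw [← this]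
        refine Finset.sum_congr rfl fun X _ => ?_
        rw [hxstar i]
    _ = (2 * (Fintype.card ι : ℝ))⁻¹
          * ∑ i, ∑ X : ι, ∑ X' : ι, ‖x X (τs X i) - x X' (τs X' i)‖ ^ 2 :=
        (Finset.mul_sum _ _ _).symm
    _ ≤ (2 * (Fintype.card ι : ℝ))⁻¹
          * ∑ i, ∑ X : ι, ∑ X' : ι, ‖x X ((σ X)⁻¹ i) - x X' ((σ X')⁻¹ i)‖ ^ 2 := by
        refine mul_le_mul_of_nonneg_left (hτs fun X => (σ X)⁻¹) ?_
        positivity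
    _ = ∑ i, (2 * (Fintype.card ι : ℝ))⁻¹
          * ∑ X : ι, ∑ X' : ι, ‖x X ((σ X)⁻¹ i) - x X' ((σ X')⁻¹ i)‖ ^ 2 :=
        Finset.mul_sum _ _ _
    _ ≤ ∑ i, ∑ X : ι, ‖x X ((σ X)⁻¹ i) - xt i‖ ^ 2 :=
        Finset.sum_le_sum fun i _ => lower_bound (fun X : ι => x X ((σ X)⁻¹ i)) (xt i)
    _ = ∑ X : ι, ∑ i, ‖x X ((σ X)⁻¹ i) - xt i‖ ^ 2 := Finset.sum_comm
    _ = ∑ X : ι, ∑ i, ‖x X i - xt (σ X i)‖ ^ 2 := by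
        refine Finset.sum_congr rfl fun X _ => ?_
        rw [← Equiv.sum_comp (σ X) (fun i => ‖x X ((σ X)⁻¹ i) - xt i‖ ^ 2)]
        simp
    _ = ∑ X : ι, rho2 (x X) xt := by
        refine Finset.sum_congr rfl fun X _ => (hσ X).symm
end

section
/- For every λ̄ > 0 and every Ñ ∈ N, the tail sum Σ_{k = Ñ²+1}^{∞} (e^{−λ̄} λ̄^k / k!) log k! is bounded above by (1 − Σ_{k=0}^{Ñ²−2} e^{−λ̄} λ̄^k / k!) · λ̄². -/
open scoped BigOperators

/-- Bound on the Poisson tail sum involving `log k!` (eq. (106) of the paper). -/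
theorem poisson_tail_log_factorial_bound (lam : ℝ) (hlam : 0 < lam) (Nt : ℕ) (hNt : 1 ≤ Nt) :
    (∑' k : ℕ, if Nt ^ 2 + 1 ≤ k then
        Real.exp (-lam) * lam ^ k / (Nat.factorial k : ℝ) * Real.log (Nat.factorial k : ℝ)
      else 0)
      ≤ (1 - ∑ k ∈ Finset.range (Nt ^ 2 - 1),
            Real.exp (-lam) * lam ^ k / (Nat.factorial k : ℝ)) * lam ^ 2 := by
  set p : ℕ → ℝ := fun k => Real.exp (-lam) * lam ^ k / (Nat.factorial k : ℝ) with hp_def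
  have hp_nonneg : ∀ k, 0 ≤ p k := fun k => by
    simp only [hp_def]; positivity
  have hpsum : HasSum p 1 := by
    have := ProbabilityTheory.poissonPMFRealSum lam.toNNReal
    simpa [ProbabilityTheory.poissonPMFReal, Real.coe_toNNReal lam hlam.le, hp_def] using this
  have hsp : Summable p := hpsum.summable
  set m := Nt ^ 2 - 1 with hm
  have hm1 : 1 ≤ Nt ^ 2 := Nat.one_le_pow _ _ hNt
  -- log factorial bound
  have hlog : ∀ j : ℕ, Real.log (Nat.factorial (j + 2) : ℝ)
      ≤ ((j : ℝ) + 2) * ((j : ℝ) + 1) := by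
    intro j
    have h1 : (Nat.factorial (j + 2) : ℝ) ≤ ((j : ℝ) + 2) ^ (j + 2) := by
      exact_mod_cast Nat.factorial_le_pow (j + 2)
    calc Real.log (Nat.factorial (j + 2) : ℝ)
        ≤ Real.log (((j : ℝ) + 2) ^ (j + 2)) :=
          Real.log_le_log (by positivity) h1
      _ = ((j : ℝ) + 2) * Real.log ((j : ℝ) + 2) := by
          rw [Real.log_pow]; push_cast; ring
      _ ≤ ((j : ℝ) + 2) * (((j : ℝ) + 2) - 1) :=
          mul_le_mul_of_nonneg_left (Real.log_le_sub_one_of_pos (by positivity)) (by positivity)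
      _ = ((j : ℝ) + 2) * ((j : ℝ) + 1) := by ring
  set g : ℕ → ℝ := fun k =>
    if Nt ^ 2 + 1 ≤ k then p k * Real.log (Nat.factorial k : ℝ) else 0 with hg_def
  set H : ℕ → ℝ := fun j => lam ^ 2 * (if m ≤ j then p j else 0) with hH_def
  have hg_nonneg : ∀ k, 0 ≤ g k := by
    intro k
    simp only [hg_def]
    split
    · exact mul_nonneg (hp_nonneg k) (Real.log_nonneg (by exact_mod_cast Nat.one_le_iff_ne_zero.mpr (Nat.factorial_ne_zero k)))
    · exact le_rfl
  have key : ∀ j : ℕ, g (j + 2) ≤ H j := by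
    intro j
    by_cases hj : m ≤ j
    · have hcond : Nt ^ 2 + 1 ≤ j + 2 := by omega
      simp only [hg_def, hH_def, if_pos hj, if_pos hcond, hp_def]
      have hfac : (Nat.factorial (j + 2) : ℝ)
          = (((j : ℝ) + 2) * ((j : ℝ) + 1)) * (Nat.factorial j : ℝ) := by
        have : Nat.factorial (j + 2) = (j + 2) * ((j + 1) * Nat.factorial j) := by
          rw [Nat.factorial_succ, Nat.factorial_succ]
        rw [this]; push_cast; ring
      have h0 : (Nat.factorial j : ℝ) ≠ 0 := by positivity
      have ha : ((j : ℝ) + 2) ≠ 0 := by positivity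
      have hb : ((j : ℝ) + 1) ≠ 0 := by positivity
      calc Real.exp (-lam) * lam ^ (j + 2) / (Nat.factorial (j + 2) : ℝ) *
            Real.log (Nat.factorial (j + 2) : ℝ)
          ≤ Real.exp (-lam) * lam ^ (j + 2) / (Nat.factorial (j + 2) : ℝ) *
            (((j : ℝ) + 2) * ((j : ℝ) + 1)) :=
            mul_le_mul_of_nonneg_left (hlog j) (by positivity)
        _ = lam ^ 2 * (Real.exp (-lam) * lam ^ j / (Nat.factorial j : ℝ)) := by
            rw [hfac]
            field_simp
            ring
    · have hcond : ¬ (Nt ^ 2 + 1 ≤ j + 2) := by omega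
      simp only [hg_def, hH_def, if_neg hcond, if_neg hj]; simp
  -- summability
  have hI : Summable (fun j => if m ≤ j then p j else 0) := by
    refine Summable.of_nonneg_of_le (fun j => ?_) (fun j => ?_) hsp
    · split
      · exact hp_nonneg j
      · exact le_rfl
    · split
      · exact le_rfl
      · exact hp_nonneg j
  have hHsum : Summable H := hI.mul_left _
  have hgs2 : Summable (fun j => g (j + 2)) :=
    Summable.of_nonneg_of_le (fun j => hg_nonneg _) key hHsum
  have hgs : Summable g := (summable_nat_add_iff 2).mp hgs2
  -- reduce tsum g to shifted sum
  have hshift : ∑' k, g k = ∑' j, g (j + 2) := by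
    have h := hgs.sum_add_tsum_nat_add 2
    have hz : ∑ i ∈ Finset.range 2, g i = 0 := by
      have h0 : g 0 = 0 := by simp [hg_def]
      have h1 : g 1 = 0 := by
        simp only [hg_def]
        rw [if_neg (by omega)]
      simp [Finset.sum_range_succ, h0, h1]
    rw [hz, zero_add] at h
    exact h.symm
  have hItsum : ∑' j, (if m ≤ j then p j else 0) = 1 - ∑ k ∈ Finset.range m, p k := by
    have h1 := hI.sum_add_tsum_nat_add m
    have h2 := hsp.sum_add_tsum_nat_add m
    rw [hpsum.tsum_eq] at h2
    have hz : ∑ i ∈ Finset.range m, (if m ≤ i then p i else 0) = 0 := by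
      apply Finset.sum_eq_zero
      intro i hi
      rw [if_neg (by simp at hi; omega)]
    have heq : (fun i => if m ≤ i + m then p (i + m) else 0) = fun i => p (i + m) := by
      funext i
      rw [if_pos (by omega)]
    rw [hz, zero_add, heq] at h1
    rw [← h1]
    linarith
  calc (∑' k, g k) = ∑' j, g (j + 2) := hshift
    _ ≤ ∑' j, H j := Summable.tsum_le_tsum key hgs2 hHsum
    _ = lam ^ 2 * ∑' j, (if m ≤ j then p j else 0) := tsum_mul_left
    _ = lam ^ 2 * (1 - ∑ k ∈ Finset.range m, p k) := by rw [hItsum]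
    _ = (1 - ∑ k ∈ Finset.range m, p k) * lam ^ 2 := by ring
end

section
/- Let A ⊆ R^d be a Borel set with finite Lebesgue measure, let s > 0, c > 0, and let y_1,...,y_ℓ ∈ R^d (ℓ ≥ 1). Define U_c = {x ∈ R^d : ‖x‖ ≤ c}. Then ∫_A exp(−s · min_{j=1}^{ℓ} min{‖x − y_j‖², c²}) dx ≤ e^{−sc²} L^d(A) + ℓ (−e^{−sc²} L^d(U_c) + ∫_{U_c} e^{−s‖x‖²} dx), where L^d denotes d-dimensional Lebesgue measure. -/
set_option maxHeartbeats 1000000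

open MeasureTheory
open scoped BigOperators

/-- The integral bound of Lemma 6 (Appendix G) of the paper. -/
theorem integral_exp_min_bound (d ℓ : ℕ) (hℓ : 0 < ℓ)
    (A : Set (EuclideanSpace ℝ (Fin d))) (hA : MeasurableSet A) (hAfin : volume A < ⊤)
    (s c : ℝ) (hs : 0 < s) (hc : 0 < c)
    (y : Fin ℓ → EuclideanSpace ℝ (Fin d)) :
    (∫ x in A, Real.exp (-(s * ⨅ j : Fin ℓ, min (‖x - y j‖ ^ 2) (c ^ 2))))
      ≤ Real.exp (-(s * c ^ 2)) * (volume A).toReal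
        + (ℓ : ℝ) * (-(Real.exp (-(s * c ^ 2))
              * (volume (Metric.closedBall (0 : EuclideanSpace ℝ (Fin d)) c)).toReal)
            + ∫ x in Metric.closedBall (0 : EuclideanSpace ℝ (Fin d)) c,
                Real.exp (-(s * ‖x‖ ^ 2))) := by
  haveI : Nonempty (Fin ℓ) := ⟨⟨0, hℓ⟩⟩
  set e0 : ℝ := Real.exp (-(s * c ^ 2)) with he0
  set g : Fin ℓ → EuclideanSpace ℝ (Fin d) → ℝ := fun j x => Real.exp (-(s * min (‖x - y j‖ ^ 2) (c ^ 2))) with hg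
  have hg_cont : ∀ j, Continuous (g j) := by
    intro j
    apply Real.continuous_exp.comp
    exact (continuous_const.mul ((continuous_norm.comp (continuous_id.sub continuous_const)).pow 2 |>.min continuous_const)).neg
  have hg_le_one : ∀ j x, g j x ≤ 1 := by
    intro j x
    rw [show (1:ℝ) = Real.exp 0 by simp]
    apply Real.exp_le_exp.2
    simp only [neg_nonpos]
    positivity
  have hg_ge : ∀ j x, e0 ≤ g j x := by
    intro j x
    apply Real.exp_le_exp.2
    rw [neg_le_neg_iff]
    exact mul_le_mul_of_nonneg_left (min_le_right _ _) hs.le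
  -- integrability of g j on a finite measure set
  have hg_int : ∀ (j) (T : Set (EuclideanSpace ℝ (Fin d))), MeasurableSet T → volume T < ⊤ → IntegrableOn (g j) T := by
    intro j T hT hTfin
    refine Integrable.mono' ((integrableOn_const_iff (C := (1:ℝ))).2 (Or.inr hTfin)) ((hg_cont j).aestronglyMeasurable.restrict) ?_
    filter_upwards with x
    rw [Real.norm_eq_abs, abs_of_pos (Real.exp_pos _)]
    exact hg_le_one j x
  set h : Fin ℓ → EuclideanSpace ℝ (Fin d) → ℝ := fun j x => g j x - e0 with hh
  have hh_nonneg : ∀ j x, 0 ≤ h j x := fun j x => sub_nonneg.2 (hg_ge j x)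
  have hh_zero : ∀ j, ∀ x ∉ Metric.closedBall (y j) c, h j x = 0 := by
    intro j x hx
    have : c ≤ ‖x - y j‖ := by
      rw [Metric.mem_closedBall, not_lt.symm] at hx
      simpa [dist_eq_norm] using le_of_not_ge (fun hle => hx (by simpa [dist_eq_norm] using hle))
    have hmin : min (‖x - y j‖ ^ 2) (c ^ 2) = c ^ 2 :=
      min_eq_right (by nlinarith [norm_nonneg (x - y j)])
    simp [hh, hg, hmin, he0]
  have hh_int : ∀ j, Integrable (h j) := by
    intro j
    apply Continuous.integrable_of_hasCompactSupport ((hg_cont j).sub continuous_const)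
    exact HasCompactSupport.intro (isCompact_closedBall _ _) (hh_zero j)
  -- pointwise bound
  have hpt : ∀ x : EuclideanSpace ℝ (Fin d), Real.exp (-(s * ⨅ j : Fin ℓ, min (‖x - y j‖ ^ 2) (c ^ 2)))
      ≤ e0 + ∑ j, h j x := by
    intro x
    obtain ⟨j0, hj0⟩ := Finite.exists_min (fun j : Fin ℓ => min (‖x - y j‖ ^ 2) (c ^ 2))
    have hinf : (⨅ j : Fin ℓ, min (‖x - y j‖ ^ 2) (c ^ 2)) = min (‖x - y j0‖ ^ 2) (c ^ 2) :=
      le_antisymm (ciInf_le (Finite.bddBelow_range _) j0) (le_ciInf hj0)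
    rw [hinf]
    have : g j0 x ≤ e0 + ∑ j, h j x := by
      calc g j0 x = e0 + h j0 x := by simp [hh]
        _ ≤ e0 + ∑ j, h j x := by
            gcongr
            exact Finset.single_le_sum (fun j _ => hh_nonneg j x) (Finset.mem_univ j0)
    exact this
  -- integrate the pointwise bound over A
  have hrhs_int : IntegrableOn (fun x => e0 + ∑ j, h j x) A := by
    exact Integrable.add ((integrableOn_const_iff (C := e0)).2 (Or.inr hAfin))
      (integrable_finset_sum Finset.univ (fun j _ => ((hh_int j).restrict (s := A))))
  have step1 : (∫ x in A, Real.exp (-(s * ⨅ j : Fin ℓ, min (‖x - y j‖ ^ 2) (c ^ 2))))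
      ≤ ∫ x in A, (e0 + ∑ j, h j x) := by
    apply integral_mono_of_nonneg
    · filter_upwards with x; positivity
    · exact hrhs_int
    · filter_upwards with x; exact hpt x
  have step2 : (∫ x in A, (e0 + ∑ j, h j x))
      = e0 * (volume A).toReal + ∑ j, ∫ x in A, h j x := by
    rw [integral_add ((integrableOn_const_iff (C := e0)).2 (Or.inr hAfin))
      (integrable_finset_sum _ (fun j _ => ((hh_int j).restrict (s := A))))]
    rw [setIntegral_const, integral_finset_sum _ (fun j _ => ((hh_int j).restrict (s := A)))]
    simp [mul_comm, smul_eq_mul, Measure.real]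
  -- bound each ∫_A h j
  have step3 : ∀ j, (∫ x in A, h j x)
      ≤ -(e0 * (volume (Metric.closedBall (0 : EuclideanSpace ℝ (Fin d)) c)).toReal)
        + ∫ x in Metric.closedBall (0 : EuclideanSpace ℝ (Fin d)) c, Real.exp (-(s * ‖x‖ ^ 2)) := by
    intro j
    have hle : (∫ x in A, h j x) ≤ ∫ x, h j x :=
      setIntegral_le_integral (hh_int j) (Filter.Eventually.of_forall (hh_nonneg j))
    have heq : (∫ x, h j x) = ∫ x in Metric.closedBall (y j) c, h j x :=
      (setIntegral_eq_integral_of_forall_compl_eq_zero (hh_zero j)).symm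
    have hballfin : volume (Metric.closedBall (y j) c) < ⊤ :=
      Metric.isBounded_closedBall.measure_lt_top
    have hsplit : (∫ x in Metric.closedBall (y j) c, h j x)
        = (∫ x in Metric.closedBall (y j) c, g j x)
          - e0 * (volume (Metric.closedBall (y j) c)).toReal := by
      rw [integral_sub (hg_int j _ measurableSet_closedBall hballfin)
        ((integrableOn_const_iff (C := e0)).2 (Or.inr hballfin)), setIntegral_const, smul_eq_mul, mul_comm, Measure.real]
    have hgeq : (∫ x in Metric.closedBall (y j) c, g j x)
        = ∫ x in Metric.closedBall (y j) c, Real.exp (-(s * ‖x - y j‖ ^ 2)) := by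
      apply setIntegral_congr_fun measurableSet_closedBall
      intro x hx
      have : ‖x - y j‖ ≤ c := by simpa [dist_eq_norm] using hx
      have hmin : min (‖x - y j‖ ^ 2) (c ^ 2) = ‖x - y j‖ ^ 2 :=
        min_eq_left (by nlinarith [norm_nonneg (x - y j)])
      simp [hg, hmin]
    have htrans : (∫ x in Metric.closedBall (y j) c, Real.exp (-(s * ‖x - y j‖ ^ 2)))
        = ∫ x in Metric.closedBall (0 : EuclideanSpace ℝ (Fin d)) c, Real.exp (-(s * ‖x‖ ^ 2)) := by
      rw [← integral_indicator measurableSet_closedBall, ← integral_indicator measurableSet_closedBall]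
      have : ∀ x : EuclideanSpace ℝ (Fin d), (Metric.closedBall (y j) c).indicator
          (fun x => Real.exp (-(s * ‖x - y j‖ ^ 2))) x
          = (Metric.closedBall (0 : EuclideanSpace ℝ (Fin d)) c).indicator (fun z => Real.exp (-(s * ‖z‖ ^ 2))) (x - y j) := by
        intro x
        by_cases hx : x ∈ Metric.closedBall (y j) c
        · have hx' : x - y j ∈ Metric.closedBall (0 : EuclideanSpace ℝ (Fin d)) c := by
            simpa [Metric.mem_closedBall, dist_eq_norm] using hx
          rw [Set.indicator_of_mem hx, Set.indicator_of_mem hx']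
        · have hx' : x - y j ∉ Metric.closedBall (0 : EuclideanSpace ℝ (Fin d)) c := by
            intro hmem; apply hx
            simpa [Metric.mem_closedBall, dist_eq_norm] using hmem
          rw [Set.indicator_of_notMem hx, Set.indicator_of_notMem hx']
      simp_rw [this]
      exact integral_sub_right_eq_self _ (y j)
    have hvol : volume (Metric.closedBall (y j) c) = volume (Metric.closedBall (0 : EuclideanSpace ℝ (Fin d)) c) :=
      Measure.addHaar_closedBall_center volume (y j) c
    rw [heq] at hle
    rw [hsplit, hgeq, htrans, hvol] at hle
    linarith
  calc (∫ x in A, Real.exp (-(s * ⨅ j : Fin ℓ, min (‖x - y j‖ ^ 2) (c ^ 2))))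
      ≤ e0 * (volume A).toReal + ∑ j, ∫ x in A, h j x := by rw [← step2]; exact step1
    _ ≤ e0 * (volume A).toReal + ∑ j : Fin ℓ,
          (-(e0 * (volume (Metric.closedBall (0 : EuclideanSpace ℝ (Fin d)) c)).toReal)
            + ∫ x in Metric.closedBall (0 : EuclideanSpace ℝ (Fin d)) c, Real.exp (-(s * ‖x‖ ^ 2))) := by
        gcongr with j _
        exact step3 j
    _ = _ := by
        rw [Finset.sum_const, Finset.card_univ, Fintype.card_fin, nsmul_eq_mul]
end

section
/- Fix integers k ≥ 1 and N with N² ≥ k, and reals λ̄ > 0 and Ñ ∈ N with Ñ ≤ N. Then Σ_{k'≥1} (e^{−λ̄} λ̄^{k'}/k'!)(log k'! + k' log N²) − Σ_{k'=1}^{Ñ²} (e^{−λ̄} λ̄^{k'} C(N², k')/N^{2k'}) log k'! ≤ λ̄ log N² + Σ_{k'=1}^{Ñ²} e^{−λ̄} λ̄^{k'} log k'! (1/k'! − C(N², k')/N^{2k'}) + (1 − Σ_{k'=0}^{Ñ²−2} e^{−λ̄} λ̄^{k'}/k'!) λ̄². -/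
open scoped BigOperators

/-- Poisson weight. -/
noncomputable def pp (lam : ℝ) (j : ℕ) : ℝ :=
  Real.exp (-lam) * lam ^ j / (Nat.factorial j : ℝ)

lemma pp_def (lam : ℝ) (j : ℕ) :
    Real.exp (-lam) * lam ^ j / (Nat.factorial j : ℝ) = pp lam j := rfl

lemma pp_nonneg {lam : ℝ} (h : 0 ≤ lam) (j : ℕ) : 0 ≤ pp lam j := by
  unfold pp; positivity

lemma pp_hasSum (lam : ℝ) : HasSum (pp lam) 1 := by
  have h := (NormedSpace.expSeries_div_hasSum_exp lam).mul_left (Real.exp (-lam))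
  have e1 : (fun j => Real.exp (-lam) * (lam ^ j / (Nat.factorial j : ℝ))) = pp lam := by
    funext j; unfold pp; ring
  rw [e1] at h
  have e2 : Real.exp (-lam) * NormedSpace.exp lam = 1 := by
    rw [← Real.exp_eq_exp_ℝ, ← Real.exp_add]; simp
  rwa [e2] at h

lemma pp_summable (lam : ℝ) : Summable (pp lam) := (pp_hasSum lam).summable

lemma pp_mean (lam : ℝ) : HasSum (fun j => pp lam j * (j : ℝ)) lam := by
  have h := (pp_hasSum lam).mul_left lam
  rw [mul_one] at h
  have e : (fun j : ℕ => pp lam (j + 1) * ((j + 1 : ℕ) : ℝ)) = fun j => lam * pp lam j := by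
    funext j
    unfold pp
    have hfac : (Nat.factorial (j + 1) : ℝ) = ((j : ℝ) + 1) * (Nat.factorial j : ℝ) := by
      push_cast [Nat.factorial_succ]; ring
    have hj : (Nat.factorial j : ℝ) ≠ 0 := by positivity
    rw [hfac]
    push_cast
    field_simp
    ring
  have h2 : HasSum (fun j : ℕ => pp lam (j + 1) * ((j + 1 : ℕ) : ℝ)) lam := by rw [e]; exact h
  have h3 := (hasSum_nat_add_iff (f := fun j : ℕ => pp lam j * (j : ℝ)) 1).mp h2
  simpa using h3

lemma log_fact_le (n : ℕ) : Real.log (Nat.factorial n : ℝ) ≤ (n : ℝ) * ((n : ℝ) - 1) := by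
  have h0 : (0 : ℝ) < (Nat.factorial n : ℝ) := by exact_mod_cast n.factorial_pos
  rcases Nat.eq_zero_or_pos n with rfl | hn
  · simp
  · have hn1 : (1 : ℝ) ≤ (n : ℝ) := by exact_mod_cast hn
    have h1 : (Nat.factorial n : ℝ) ≤ (n : ℝ) ^ n := by
      exact_mod_cast Nat.factorial_le_pow n
    have h2 : Real.log (Nat.factorial n : ℝ) ≤ (n : ℝ) * Real.log n :=
      (Real.log_le_log h0 h1).trans_eq (Real.log_pow n n)
    have h3 : Real.log n ≤ (n : ℝ) - 1 := Real.log_le_sub_one_of_pos (by linarith)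
    have h4 : Real.log n ≥ 0 := Real.log_nonneg hn1
    nlinarith

lemma pp_step {lam : ℝ} (hlam : 0 ≤ lam) (j : ℕ) :
    pp lam (j + 2) * Real.log (Nat.factorial (j + 2) : ℝ) ≤ lam ^ 2 * pp lam j := by
  have hppnn : 0 ≤ pp lam (j + 2) := pp_nonneg hlam _
  have hb : Real.log (Nat.factorial (j + 2) : ℝ) ≤ ((j : ℝ) + 2) * ((j : ℝ) + 1) := by
    have := log_fact_le (j + 2)
    push_cast at this
    nlinarith [this]
  have heq : pp lam (j + 2) * (((j : ℝ) + 2) * ((j : ℝ) + 1)) = lam ^ 2 * pp lam j := by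
    unfold pp
    have hfac : (Nat.factorial (j + 2) : ℝ)
        = ((j : ℝ) + 2) * (((j : ℝ) + 1) * (Nat.factorial j : ℝ)) := by
      push_cast [Nat.factorial_succ]; ring
    have hj : (Nat.factorial j : ℝ) ≠ 0 := by positivity
    rw [hfac]
    field_simp
    ring
  calc pp lam (j + 2) * Real.log (Nat.factorial (j + 2) : ℝ)
      ≤ pp lam (j + 2) * (((j : ℝ) + 2) * ((j : ℝ) + 1)) :=
        mul_le_mul_of_nonneg_left hb hppnn
    _ = lam ^ 2 * pp lam j := heq

lemma pp_logfact_summable {lam : ℝ} (hlam : 0 ≤ lam) :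
    Summable (fun j => pp lam j * Real.log (Nat.factorial j : ℝ)) := by
  rw [← summable_nat_add_iff 2]
  apply Summable.of_nonneg_of_le
    (fun j => mul_nonneg (pp_nonneg hlam _)
      (Real.log_nonneg (by exact_mod_cast Nat.one_le_iff_ne_zero.mpr (Nat.factorial_ne_zero _))))
    (fun j => pp_step hlam j)
  exact (pp_summable lam).mul_left (lam ^ 2)

lemma pp_tail {lam : ℝ} (hlam : 0 ≤ lam) (m : ℕ) :
    (∑' j, pp lam j * Real.log (Nat.factorial j : ℝ)) ≤
      (∑ j ∈ Finset.Icc 1 m, pp lam j * Real.log (Nat.factorial j : ℝ))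
        + (1 - ∑ j ∈ Finset.range (m - 1), pp lam j) * lam ^ 2 := by
  set f : ℕ → ℝ := fun j => pp lam j * Real.log (Nat.factorial j : ℝ) with hfdef
  have hf : Summable f := pp_logfact_summable hlam
  have hf0 : f 0 = 0 := by simp [hfdef]
  have hf1 : f 1 = 0 := by simp [hfdef, Nat.factorial_one]
  have htot : ∑' j, pp lam j = 1 := (pp_hasSum lam).tsum_eq
  rcases Nat.eq_zero_or_pos m with rfl | hm
  · -- m = 0
    have hsplit := Summable.sum_add_tsum_nat_add 2 hf
    have hrange2 : ∑ i ∈ Finset.range 2, f i = 0 := by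
      simp [Finset.sum_range_succ, hf0, hf1]
    have htail : (∑' j, f (j + 2)) ≤ ∑' j, lam ^ 2 * pp lam j := by
      apply Summable.tsum_le_tsum (fun j => pp_step hlam j)
      · exact (summable_nat_add_iff 2).mpr hf
      · exact (pp_summable lam).mul_left (lam ^ 2)
    have hval : (∑' j, lam ^ 2 * pp lam j) = lam ^ 2 := by
      rw [tsum_mul_left, htot, mul_one]
    simp only [Nat.zero_sub, Finset.range_zero, Finset.sum_empty, Finset.Icc_self]
    have : (∑' j, f j) ≤ lam ^ 2 := by
      rw [← hsplit, hrange2, zero_add]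
      exact htail.trans_eq hval
    simpa using this
  · obtain ⟨s, rfl⟩ : ∃ s, m = s + 1 := ⟨m - 1, (Nat.succ_pred_eq_of_pos hm).symm⟩
    have hsplit := Summable.sum_add_tsum_nat_add (s + 2) hf
    have hrange : ∑ i ∈ Finset.range (s + 2), f i = ∑ j ∈ Finset.Icc 1 (s + 1), f j := by
      have hins : Finset.range (s + 2) = insert 0 (Finset.Icc 1 (s + 1)) := by
        ext x; simp only [Finset.mem_range, Finset.mem_insert, Finset.mem_Icc]; omega
      rw [hins, Finset.sum_insert (by simp), hf0, zero_add]
    have htail : (∑' j, f (j + (s + 2))) ≤ ∑' j, lam ^ 2 * pp lam (j + s) := by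
      apply Summable.tsum_le_tsum
      · intro j
        have h := pp_step hlam (j + s)
        have e : j + (s + 2) = j + s + 2 := by omega
        rw [hfdef]
        simp only [e]
        exact h
      · exact (summable_nat_add_iff (s + 2)).mpr hf
      · exact ((summable_nat_add_iff s).mpr (pp_summable lam)).mul_left (lam ^ 2)
    have hppsplit := Summable.sum_add_tsum_nat_add s (pp_summable lam)
    have hval : (∑' j, lam ^ 2 * pp lam (j + s))
        = lam ^ 2 * (1 - ∑ j ∈ Finset.range s, pp lam j) := by
      rw [tsum_mul_left]
      congr 1
      rw [htot] at hppsplit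
      linarith [hppsplit]
    have hs1 : s + 1 - 1 = s := by omega
    rw [hs1]
    have : (∑' j, f j) ≤ (∑ j ∈ Finset.Icc 1 (s + 1), f j)
        + lam ^ 2 * (1 - ∑ j ∈ Finset.range s, pp lam j) := by
      rw [← hsplit, hrange]
      have := htail.trans_eq hval
      linarith
    linarith [this]

/-- The bookkeeping inequality of Lemma 11 (Appendix H) of the paper. -/
theorem poisson_bookkeeping_bound (k N Nt : ℕ) (hk : 1 ≤ k) (hkN : k ≤ N ^ 2)
    (lam : ℝ) (hlam : 0 < lam) (hNt : Nt ≤ N) :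
    (∑' k' : ℕ, Real.exp (-lam) * lam ^ k' / (Nat.factorial k' : ℝ)
          * (Real.log (Nat.factorial k' : ℝ) + (k' : ℝ) * Real.log ((N : ℝ) ^ 2)))
        - ∑ k' ∈ Finset.Icc 1 (Nt ^ 2),
            Real.exp (-lam) * lam ^ k' * ((N ^ 2).choose k' : ℝ) / (N : ℝ) ^ (2 * k')
              * Real.log (Nat.factorial k' : ℝ)
      ≤ lam * Real.log ((N : ℝ) ^ 2)
          + ∑ k' ∈ Finset.Icc 1 (Nt ^ 2),
              Real.exp (-lam) * lam ^ k' * Real.log (Nat.factorial k' : ℝ)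
                * (1 / (Nat.factorial k' : ℝ) - ((N ^ 2).choose k' : ℝ) / (N : ℝ) ^ (2 * k'))
          + (1 - ∑ k' ∈ Finset.range (Nt ^ 2 - 1),
                Real.exp (-lam) * lam ^ k' / (Nat.factorial k' : ℝ)) * lam ^ 2 := by
  have hlam' := hlam.le
  have hN2 : (1 : ℕ) ≤ N ^ 2 := hk.trans hkN
  have hN1 : (1 : ℝ) ≤ (N : ℝ) ^ 2 := by exact_mod_cast hN2
  have hc0 : 0 ≤ Real.log ((N : ℝ) ^ 2) := Real.log_nonneg hN1
  simp only [pp_def]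
  set c := Real.log ((N : ℝ) ^ 2) with hc
  have hflog := pp_logfact_summable (lam := lam) hlam'
  have hmean := pp_mean lam
  have hT : (∑' k' : ℕ, pp lam k' * (Real.log (Nat.factorial k' : ℝ) + (k' : ℝ) * c))
      = (∑' k', pp lam k' * Real.log (Nat.factorial k' : ℝ)) + c * lam := by
    have e : (fun k' : ℕ => pp lam k' * (Real.log (Nat.factorial k' : ℝ) + (k' : ℝ) * c))
        = fun k' => pp lam k' * Real.log (Nat.factorial k' : ℝ) + c * (pp lam k' * (k' : ℝ)) := by
      funext j; ring
    rw [e, Summable.tsum_add hflog (hmean.summable.mul_left c)]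
    congr 1
    exact (hmean.mul_left c).tsum_eq
  have hQ : (∑ k' ∈ Finset.Icc 1 (Nt ^ 2),
        Real.exp (-lam) * lam ^ k' * Real.log (Nat.factorial k' : ℝ)
          * (1 / (Nat.factorial k' : ℝ) - ((N ^ 2).choose k' : ℝ) / (N : ℝ) ^ (2 * k')))
      = (∑ k' ∈ Finset.Icc 1 (Nt ^ 2), pp lam k' * Real.log (Nat.factorial k' : ℝ))
        - (∑ k' ∈ Finset.Icc 1 (Nt ^ 2),
            Real.exp (-lam) * lam ^ k' * ((N ^ 2).choose k' : ℝ) / (N : ℝ) ^ (2 * k')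
              * Real.log (Nat.factorial k' : ℝ)) := by
    rw [← Finset.sum_sub_distrib]
    refine Finset.sum_congr rfl fun i _ => ?_
    unfold pp
    ring
  rw [hT, hQ]
  have htail := pp_tail hlam' (Nt ^ 2)
  linarith [htail]
end
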